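/- Let U be a point of the Sato Grassmannian UGM and let g ∈ ℂ[[z]] ⊂ ℂ((z)) be a formal power series with nonzero constant term. Then the subspace gU = {g·u : u ∈ U} of ℂ((z)) is again a point of UGM. -/

import Mathlib

set_option synthInstance.maxHeartbeats 1000000
set_option maxHeartbeats 1000000

noncomputable section

/- Shortcut instances to speed up instance search for submodules of `ℂ((z))`. -/
instance (U : Submodule ℂ (LaurentSeries ℂ)) : AddCommGroup U := inferInstance
instance (U : Submodule ℂ (LaurentSeries ℂ)) : Module ℂ U := inferInstance

/-- The variable `z` in the field of formal Laurent series `ℂ((z))`. -/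
def zL : LaurentSeries ℂ := HahnSeries.single 1 1

/-- Truncation: keep only the coefficients of nonpositive powers of `z`.
This is the projection onto `V_φ = ℂ[z⁻¹]` along `V₀ = zℂ[[z]]`. -/
def trunc : LaurentSeries ℂ →ₗ[ℂ] LaurentSeries ℂ where
  toFun f :=
    { coeff := fun n => if n ≤ 0 then f.coeff n else 0
      isPWO_support' := f.isPWO_support.mono (by
        intro n hn
        simp only [Function.mem_support] at hn ⊢
        intro h
        apply hn
        simp [h]) }
  map_add' f g := by
    ext n
    by_cases h : n ≤ 0 <;> simp [HahnSeries.coeff_add, h]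
  map_smul' c f := by
    ext n
    by_cases h : n ≤ 0 <;> simp [HahnSeries.coeff_smul, h]

/-- `V_φ = ℂ[z⁻¹]`, realized as the range of the truncation map. -/
def Vphi : Submodule ℂ (LaurentSeries ℂ) := LinearMap.range trunc

/-- The projection `π : ℂ((z)) → V_φ` restricted to a subspace `U`. -/
def projU (U : Submodule ℂ (LaurentSeries ℂ)) : U →ₗ[ℂ] Vphi :=
  trunc.rangeRestrict.comp U.subtype

/-- The Sato Grassmannian: subspaces `U ⊆ ℂ((z))` such that the kernel and the
cokernel of `π|_U : U → V_φ` are finite dimensional of the same dimension. -/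
def UGM : Set (Submodule ℂ (LaurentSeries ℂ)) :=
  {U | FiniteDimensional ℂ (LinearMap.ker (projU U)) ∧
       FiniteDimensional ℂ (Vphi ⧸ LinearMap.range (projU U)) ∧
       Module.finrank ℂ (LinearMap.ker (projU U)) =
         Module.finrank ℂ (Vphi ⧸ LinearMap.range (projU U))}

instance : SMulCommClass ℂ (LaurentSeries ℂ) (LaurentSeries ℂ) := by
  constructor
  intro c a b
  show c • (a * b) = a * (c • b)
  rw [← HahnSeries.single_zero_mul_eq_smul, ← HahnSeries.single_zero_mul_eq_smul]
  ring

/- ### Auxiliary lemmas -/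

lemma trunc_coeff (f : LaurentSeries ℂ) (n : ℤ) :
    (trunc f).coeff n = if n ≤ 0 then f.coeff n else 0 := rfl

lemma trunc_eq_self_of_mem {f : LaurentSeries ℂ} (hf : f ∈ Vphi) : trunc f = f := by
  obtain ⟨g, rfl⟩ := hf
  ext n
  by_cases h : n ≤ 0 <;> simp [trunc_coeff, h]

lemma coeff_eq_zero_of_mem_Vphi {f : LaurentSeries ℂ} (hf : f ∈ Vphi) {n : ℤ} (hn : 0 < n) :
    f.coeff n = 0 := by
  rw [← trunc_eq_self_of_mem hf, trunc_coeff, if_neg (not_le.mpr hn)]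

lemma coeff_ofPowerSeries_neg (g : PowerSeries ℂ) {n : ℤ} (hn : n < 0) :
    (HahnSeries.ofPowerSeries ℤ ℂ g).coeff n = 0 := by
  rw [HahnSeries.ofPowerSeries_apply, HahnSeries.embDomain_notin_range]
  rintro ⟨m, hm⟩
  change ((m : ℤ)) = n at hm
  omega

/-- Product of a series supported in degrees `≥ 0` with a series supported in
degrees `> 0` has no coefficients in degrees `≤ 0`. -/
lemma mul_coeff_eq_zero_aux {a b : LaurentSeries ℂ} (ha : ∀ n < (0 : ℤ), a.coeff n = 0)
    (hb : ∀ n ≤ (0 : ℤ), b.coeff n = 0) {n : ℤ} (hn : n ≤ 0) : (a * b).coeff n = 0 := by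
  rw [HahnSeries.coeff_mul]
  apply Finset.sum_eq_zero
  rintro ⟨i, j⟩ hij
  rw [Finset.mem_addAntidiagonal] at hij
  obtain ⟨hi, hj, hsum⟩ := hij
  exfalso
  have hi0 : (0 : ℤ) ≤ i := by
    by_contra h
    exact hi (ha i (not_le.mp h))
  have hj0 : (0 : ℤ) < j := by
    by_contra h
    exact hj (hb j (not_lt.mp h))
  omega

/-- Key lemma: `π(g·f) = π(g·π(f))` for `g ∈ ℂ[[z]]`. -/
lemma trunc_mul_trunc (g : PowerSeries ℂ) (f : LaurentSeries ℂ) :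
    trunc (HahnSeries.ofPowerSeries ℤ ℂ g * trunc f)
      = trunc (HahnSeries.ofPowerSeries ℤ ℂ g * f) := by
  set G := HahnSeries.ofPowerSeries ℤ ℂ g with hGdef
  ext n
  by_cases hn : n ≤ 0
  · rw [trunc_coeff, trunc_coeff, if_pos hn, if_pos hn]
    have key : (G * (f - trunc f)).coeff n = 0 := by
      apply mul_coeff_eq_zero_aux (fun m hm => coeff_ofPowerSeries_neg g hm) _ hn
      intro m hm
      rw [HahnSeries.coeff_sub, trunc_coeff, if_pos hm, sub_self]
    have : G * f - G * trunc f = G * (f - trunc f) := by ring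
    have h2 : (G * f).coeff n - (G * trunc f).coeff n = 0 := by
      rw [← HahnSeries.coeff_sub, this, key]
    linear_combination -h2
  · rw [trunc_coeff, trunc_coeff, if_neg hn, if_neg hn]

lemma ofPowerSeries_coeff_zero (g : PowerSeries ℂ) :
    (HahnSeries.ofPowerSeries ℤ ℂ g).coeff 0 = PowerSeries.constantCoeff g := by
  have := HahnSeries.ofPowerSeries_apply_coeff (Γ := ℤ) g 0
  simpa using this

lemma ofPowerSeries_order_eq_zero {g : PowerSeries ℂ}
    (hg : PowerSeries.constantCoeff g ≠ 0) :
    (HahnSeries.ofPowerSeries ℤ ℂ g).order = 0 := by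
  set G := HahnSeries.ofPowerSeries ℤ ℂ g with hGdef
  have h0 : G.coeff 0 ≠ 0 := by rw [hGdef, ofPowerSeries_coeff_zero]; exact hg
  have hne : G ≠ 0 := fun h => h0 (by rw [h]; simp)
  have hle : G.order ≤ 0 := HahnSeries.order_le_of_coeff_ne_zero h0
  have hge : (0 : ℤ) ≤ G.order := by
    by_contra h
    exact HahnSeries.coeff_order_eq_zero.not.mpr hne (coeff_ofPowerSeries_neg g (not_le.mp h))
  omega

lemma trunc_G_mul_ne_zero {g : PowerSeries ℂ} (hg : PowerSeries.constantCoeff g ≠ 0)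
    {v : LaurentSeries ℂ} (hv : v ∈ Vphi) (hv0 : v ≠ 0) :
    trunc (HahnSeries.ofPowerSeries ℤ ℂ g * v) ≠ 0 := by
  set G := HahnSeries.ofPowerSeries ℤ ℂ g with hGdef
  have h0 : G.coeff 0 ≠ 0 := by rw [hGdef, ofPowerSeries_coeff_zero]; exact hg
  have hne : G ≠ 0 := fun h => h0 (by rw [h]; simp)
  have hord : G.order = 0 := ofPowerSeries_order_eq_zero hg
  have hvord : v.order ≤ 0 := by
    by_contra h
    exact HahnSeries.coeff_order_eq_zero.not.mpr hv0 (coeff_eq_zero_of_mem_Vphi hv (not_le.mp h))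
  have hmul : (G * v).coeff (G.order + v.order) = G.leadingCoeff * v.leadingCoeff :=
    HahnSeries.coeff_mul_order_add_order G v
  rw [hord, zero_add] at hmul
  have hGo : G.leadingCoeff ≠ 0 := HahnSeries.leadingCoeff_ne_zero.mpr hne
  have hvo : v.leadingCoeff ≠ 0 := HahnSeries.leadingCoeff_ne_zero.mpr hv0
  have hcne : (G * v).coeff v.order ≠ 0 := by
    rw [hmul]; exact mul_ne_zero hGo hvo
  intro h
  apply hcne
  have := congrArg (fun x : LaurentSeries ℂ => x.coeff v.order) h
  simpa [trunc_coeff, hvord] using this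

/-- gauge transformations preserve UGM: if `U ∈ UGM` and
`g ∈ ℂ[[z]]` has nonzero constant term, then `gU = {g·u : u ∈ U} ∈ UGM`. -/
theorem gauge_transform_mem_UGM (U : Submodule ℂ (LaurentSeries ℂ)) (hU : U ∈ UGM)
    (g : PowerSeries ℂ) (hg : PowerSeries.constantCoeff g ≠ 0) :
    Submodule.map (LinearMap.mulLeft ℂ (HahnSeries.ofPowerSeries ℤ ℂ g)) U ∈ UGM := by
  obtain ⟨hk, hc, hrk⟩ := hU
  set G := HahnSeries.ofPowerSeries ℤ ℂ g with hGdef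
  have h0 : G.coeff 0 ≠ 0 := by rw [hGdef, ofPowerSeries_coeff_zero]; exact hg
  have hG0 : G ≠ 0 := fun h => h0 (by rw [h]; simp)
  set M : LaurentSeries ℂ →ₗ[ℂ] LaurentSeries ℂ := LinearMap.mulLeft ℂ G with hMdef
  have hMinj : Function.Injective M := fun a b h => by
    have : G * a = G * b := h
    exact mul_left_cancel₀ hG0 this
  -- The map T : V_φ → V_φ, v ↦ π(g·v), is a linear isomorphism.
  set T : Vphi →ₗ[ℂ] Vphi := trunc.rangeRestrict.comp (M.comp Vphi.subtype) with hTdef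
  have hTval : ∀ v : Vphi, ((T v : LaurentSeries ℂ)) = trunc (G * (v : LaurentSeries ℂ)) :=
    fun v => rfl
  have hTinj : Function.Injective T := by
    intro a b hab
    have h1 : trunc (G * ((a : LaurentSeries ℂ) - (b : LaurentSeries ℂ))) = 0 := by
      have := congrArg (Subtype.val) hab
      rw [hTval, hTval] at this
      rw [mul_sub, map_sub, this, sub_self]
    by_contra hne
    have hsub : (a : LaurentSeries ℂ) - (b : LaurentSeries ℂ) ≠ 0 := by
      intro h
      exact hne (Subtype.ext (by linear_combination h))
    exact trunc_G_mul_ne_zero hg (Vphi.sub_mem a.2 b.2) hsub h1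
  have hTsurj : Function.Surjective T := by
    intro w
    refine ⟨⟨trunc (G⁻¹ * (w : LaurentSeries ℂ)), ⟨G⁻¹ * (w : LaurentSeries ℂ), rfl⟩⟩, ?_⟩
    apply Subtype.ext
    rw [hTval]
    show trunc (G * trunc (G⁻¹ * (w : LaurentSeries ℂ))) = (w : LaurentSeries ℂ)
    rw [trunc_mul_trunc, ← mul_assoc, mul_inv_cancel₀ hG0, one_mul,
      trunc_eq_self_of_mem w.2]
  set Te : Vphi ≃ₗ[ℂ] Vphi := LinearEquiv.ofBijective T ⟨hTinj, hTsurj⟩ with hTedef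
  set U' : Submodule ℂ (LaurentSeries ℂ) := Submodule.map M U with hU'def
  set e : U ≃ₗ[ℂ] U' := Submodule.equivMapOfInjective M hMinj U with hedef
  have hcomm : ∀ u : U, projU U' (e u) = Te (projU U u) := by
    intro u
    apply Subtype.ext
    show trunc (G * (u : LaurentSeries ℂ)) = trunc (G * trunc (u : LaurentSeries ℂ))
    exact (trunc_mul_trunc g (u : LaurentSeries ℂ)).symm
  -- kernels
  have hker : LinearMap.ker (projU U') = Submodule.map (e.toLinearMap)
      (LinearMap.ker (projU U)) := by
    ext x
    constructor
    · intro hx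
      obtain ⟨u, rfl⟩ := e.surjective x
      refine ⟨u, ?_, rfl⟩
      simp only [SetLike.mem_coe, LinearMap.mem_ker] at hx ⊢
      rw [hcomm u] at hx
      have h2 : Te ((projU U) u) = Te 0 := by rw [hx, map_zero]
      exact Te.injective h2
    · rintro ⟨u, hu, rfl⟩
      simp only [SetLike.mem_coe, LinearMap.mem_ker] at hu ⊢
      show projU U' (e u) = 0
      rw [hcomm u, hu, map_zero]
  have ek : (LinearMap.ker (projU U)) ≃ₗ[ℂ] (LinearMap.ker (projU U')) :=
    (Submodule.equivMapOfInjective e.toLinearMap e.injective _).trans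
      (LinearEquiv.ofEq _ _ hker.symm)
  -- ranges
  have hrange : LinearMap.range (projU U') = Submodule.map (Te : Vphi →ₗ[ℂ] Vphi)
      (LinearMap.range (projU U)) := by
    ext w
    constructor
    · rintro ⟨x, rfl⟩
      obtain ⟨u, rfl⟩ := e.surjective x
      exact ⟨projU U u, ⟨u, rfl⟩, (hcomm u).symm⟩
    · rintro ⟨v, ⟨u, rfl⟩, rfl⟩
      exact ⟨e u, hcomm u⟩
  have q : (Vphi ⧸ LinearMap.range (projU U)) ≃ₗ[ℂ]
      (Vphi ⧸ LinearMap.range (projU U')) :=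
    Submodule.Quotient.equiv _ _ Te hrange.symm
  refine ⟨ek.finiteDimensional, q.finiteDimensional, ?_⟩
  rw [← ek.finrank_eq, ← q.finrank_eq]
  exact hrk

end
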